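/- Let u be a weak solution of the 2D periodic Navier–Stokes equation in variational form with viscosity ν > 0, forcing f ∈ L²(0,∞; H̊), and initial condition u₀ ∈ H̊. Then for all t ≥ s ≥ 0, ‖u(·,t)‖²_{L²} ≤ ‖f‖²_{L²}/(νλ₁)² + e^{-λ₁ν(t-s)}‖u(·,s)‖²_{L²}, where λ₁ = 4π²/max{ℓ₁,ℓ₂}². -/

import Mathlib

open Real Filter
open scoped RealInnerProductSpace

/-- Exponential `L²` energy bound for solutions of the 2D periodic NSE in
abstract variational form. `lam1` is the Poincaré/Stokes constant
`λ₁ = 4π²/max{ℓ₁,ℓ₂}²`. -/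
theorem stmt9 {H : Type*} [NormedAddCommGroup H] [InnerProductSpace ℝ H]
    (ℓ₁ ℓ₂ ν F lam1 : ℝ) (hℓ₁ : 0 < ℓ₁) (hℓ₂ : 0 < ℓ₂) (hν : 0 < ν)
    (hlam1 : lam1 = 4*π^2 / (max ℓ₁ ℓ₂)^2)
    (u u' f : ℝ → H)
    (a : H → H → ℝ) (b : H → H → H → ℝ)
    (hu : ∀ t, 0 ≤ t → HasDerivAt u (u' t) t)
    (heq : ∀ t, 0 ≤ t → ∀ φ : H,
      ⟪u' t, φ⟫ + b (u t) (u t) φ + ν * a (u t) φ = ⟪f t, φ⟫)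
    (hb : ∀ v w : H, b v w w = 0)
    (hPoin : ∀ v : H, lam1 * ⟪v, v⟫ ≤ a v v)
    (hf : ∀ t, 0 ≤ t → ‖f t‖ ≤ F) :
    ∀ s t : ℝ, 0 ≤ s → s ≤ t →
      ‖u t‖^2 ≤ F^2/(ν*lam1)^2 + Real.exp (-lam1*ν*(t-s)) * ‖u s‖^2 := by
  have hmax : (0:ℝ) < max ℓ₁ ℓ₂ := lt_max_of_lt_left hℓ₁
  have hlam : 0 < lam1 := by
    rw [hlam1]
    have hπ := Real.pi_pos
    positivity
  set c : ℝ := lam1 * ν with hcdef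
  have hc : 0 < c := mul_pos hlam hν
  have hF : 0 ≤ F := le_trans (norm_nonneg _) (hf 0 le_rfl)
  -- key pointwise differential inequality
  have key : ∀ x : ℝ, 0 ≤ x → c * ‖u x‖^2 + 2 * ⟪u' x, u x⟫ ≤ F^2 / c := by
    intro x hx
    have h1 : ⟪u' x, u x⟫ = ⟪f x, u x⟫ - ν * a (u x) (u x) := by
      have := heq x hx (u x)
      rw [hb] at this
      linarith
    have h2 : ⟪f x, u x⟫ ≤ F * ‖u x‖ := by
      calc ⟪f x, u x⟫ ≤ ‖f x‖ * ‖u x‖ := real_inner_le_norm _ _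
        _ ≤ F * ‖u x‖ := by
            exact mul_le_mul_of_nonneg_right (hf x hx) (norm_nonneg _)
    have h3 : lam1 * ‖u x‖^2 ≤ a (u x) (u x) := by
      have := hPoin (u x)
      rwa [real_inner_self_eq_norm_sq] at this
    have h4 : 2 * (F * ‖u x‖) ≤ F^2 / c + c * ‖u x‖^2 := by
      rw [div_add' _ _ _ hc.ne', le_div_iff₀ hc]
      nlinarith [sq_nonneg (F - c * ‖u x‖)]
    have h5 : ν * (lam1 * ‖u x‖^2) ≤ ν * a (u x) (u x) :=
      mul_le_mul_of_nonneg_left h3 hν.le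
    nlinarith
  -- the auxiliary function
  set g : ℝ → ℝ := fun x => F^2 / c^2 * Real.exp (c * x) - Real.exp (c * x) * ‖u x‖^2
    with hgdef
  have hg : ∀ x : ℝ, 0 ≤ x → HasDerivAt g
      (F^2 / c^2 * (c * Real.exp (c * x))
        - (c * Real.exp (c * x) * ‖u x‖^2 + Real.exp (c * x) * (2 * ⟪u' x, u x⟫))) x := by
    intro x hx
    have hexp : HasDerivAt (fun t : ℝ => Real.exp (c * t)) (c * Real.exp (c * x)) x := by
      have h := ((hasDerivAt_id x).const_mul c).exp
      simpa [mul_comm] using h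
    have hnorm : HasDerivAt (fun t => ‖u t‖^2) (2 * ⟪u' x, u x⟫) x := by
      have h := (hu x hx).inner ℝ (hu x hx)
      have h2 : HasDerivAt (fun t => ⟪u t, u t⟫)
          (⟪u x, u' x⟫ + ⟪u' x, u x⟫) x := h
      simp only [real_inner_self_eq_norm_sq] at h2
      convert h2 using 1
      rw [real_inner_comm (u x) (u' x)]
      ring
    have := (hexp.const_mul (F^2 / c^2)).sub (hexp.mul hnorm)
    convert this using 1
    all_goals rfl
  -- monotonicity of g on [s, ∞)
  intro s t hs hst
  have hmono : MonotoneOn g (Set.Ici s) := by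
    apply monotoneOn_of_deriv_nonneg (convex_Ici s)
    · intro x hx
      exact ((hg x (le_trans hs hx)).continuousAt).continuousWithinAt
    · intro x hx
      rw [interior_Ici] at hx
      exact ((hg x (le_trans hs (le_of_lt hx))).differentiableAt).differentiableWithinAt
    · intro x hx
      rw [interior_Ici] at hx
      have hx0 : 0 ≤ x := le_trans hs (le_of_lt hx)
      rw [(hg x hx0).deriv]
      have hk := key x hx0
      have he := Real.exp_pos (c * x)
      have h6 : Real.exp (c*x) * (c * ‖u x‖^2 + 2 * ⟪u' x, u x⟫)
          ≤ Real.exp (c*x) * (F^2 / c) := mul_le_mul_of_nonneg_left hk he.le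
      have hdiv : F^2 / c^2 * (c * Real.exp (c*x)) = Real.exp (c*x) * (F^2 / c) := by
        field_simp
      nlinarith [h6, hdiv]
  have hgs : g s ≤ g t := hmono (Set.self_mem_Ici) (le_trans Set.self_mem_Ici hst) hst
  -- unfold and conclude
  have h1 : F^2 / c^2 * Real.exp (c * s) - Real.exp (c * s) * ‖u s‖^2
      ≤ F^2 / c^2 * Real.exp (c * t) - Real.exp (c * t) * ‖u t‖^2 := hgs
  have hexpt := Real.exp_pos (c * t)
  have hexps := Real.exp_pos (c * s)
  have hEF : 0 ≤ F^2 / c^2 * Real.exp (c * s) := by positivity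
  have hcsq : (ν * lam1)^2 = c^2 := by rw [hcdef]; ring
  rw [hcsq]
  have hexpeq : Real.exp (-lam1*ν*(t-s)) * Real.exp (c * t) = Real.exp (c * s) := by
    rw [← Real.exp_add]
    congr 1
    rw [hcdef]; ring
  have h2 : Real.exp (c*t) * ‖u t‖^2
      ≤ F^2 / c^2 * Real.exp (c*t) + Real.exp (c*s) * ‖u s‖^2 := by linarith
  apply le_of_mul_le_mul_right _ hexpt
  calc ‖u t‖^2 * Real.exp (c*t) = Real.exp (c*t) * ‖u t‖^2 := mul_comm _ _
    _ ≤ F^2 / c^2 * Real.exp (c*t) + Real.exp (c*s) * ‖u s‖^2 := h2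
    _ = (F^2/c^2 + Real.exp (-lam1*ν*(t-s)) * ‖u s‖^2) * Real.exp (c*t) := by
        rw [add_mul]
        congr 1
        rw [mul_right_comm (Real.exp (-lam1*ν*(t-s))) (‖u s‖^2), hexpeq]
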